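/- Consider six Hermitian ±1-valued observables A₀, A₁, A₂ on H_A and B₀, B₁, B₂ on H_B (so A_i² = 1, B_j² = 1), and the Bell operator I = Σ_{i=0}^{2} A_i ⊗ B_i − Σ_{i≠j} A_i ⊗ B_j. Then 6·(1⊗1) − I = Σ_{i=0}^{2} (A_i ⊗ 1 + 1 ⊗ s_i)² + (1 ⊗ (B₀ + B₁ + B₂)/2)², where s₀ = (−B₀ + B₁ + B₂)/2, s₁ = (B₀ − B₁ + B₂)/2, s₂ = (B₀ + B₁ − B₂)/2. Consequently Tr[I·ρ] ≤ 6 for every density matrix ρ on H_A ⊗ H_B. -/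

import Mathlib

open Matrix ComplexOrder Kronecker

lemma kron_sub' {a b c d : ℕ} (A : Matrix (Fin a) (Fin b) ℂ) (B₁ B₂ : Matrix (Fin c) (Fin d) ℂ) :
    A ⊗ₖ (B₁ - B₂) = A ⊗ₖ B₁ - A ⊗ₖ B₂ := by
  ext ⟨i1,i2⟩ ⟨j1,j2⟩; simp [kroneckerMap_apply, mul_sub]

lemma sub_kron' {a b c d : ℕ} (A₁ A₂ : Matrix (Fin a) (Fin b) ℂ) (B : Matrix (Fin c) (Fin d) ℂ) :
    (A₁ - A₂) ⊗ₖ B = A₁ ⊗ₖ B - A₂ ⊗ₖ B := by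
  ext ⟨i1,i2⟩ ⟨j1,j2⟩; simp [kroneckerMap_apply, sub_mul]

lemma kron_conjTranspose' {a b : ℕ} (M : Matrix (Fin a) (Fin a) ℂ) (N : Matrix (Fin b) (Fin b) ℂ) :
    (M ⊗ₖ N)ᴴ = Mᴴ ⊗ₖ Nᴴ := by
  ext ⟨i1,i2⟩ ⟨j1,j2⟩; simp [conjTranspose_apply, kroneckerMap_apply, mul_comm]

lemma trace_re_nonneg' {n : Type*} [Fintype n] [DecidableEq n] {M : Matrix n n ℂ} (h : M.PosSemidef) :
    0 ≤ M.trace.re := by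
  rw [Matrix.trace]
  simp only [Complex.re_sum]
  refine Finset.sum_nonneg fun i _ => ?_
  have := h.re_dotProduct_nonneg (Pi.single i 1)
  simpa [mulVec, dotProduct, Pi.single_apply] using this

lemma trace_mul_re_nonneg' {n : Type*} [Fintype n] [DecidableEq n] {P ρ : Matrix n n ℂ}
    (hP : P.PosSemidef) (hρ : ρ.PosSemidef) : 0 ≤ ((P * ρ).trace).re := by
  open scoped MatrixOrder in obtain ⟨C, hC⟩ := CStarAlgebra.nonneg_iff_eq_star_mul_self.mp hρ.nonneg
  rw [star_eq_conjTranspose] at hC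
  rw [hC, ← Matrix.mul_assoc, Matrix.trace_mul_cycle]
  exact trace_re_nonneg' (hP.mul_mul_conjTranspose_same C)

theorem three_setting_bell_sos {dA dB : ℕ}
    (A : Fin 3 → Matrix (Fin dA) (Fin dA) ℂ)
    (B : Fin 3 → Matrix (Fin dB) (Fin dB) ℂ)
    (hA : ∀ i, (A i).IsHermitian) (hA2 : ∀ i, A i * A i = 1)
    (hB : ∀ j, (B j).IsHermitian) (hB2 : ∀ j, B j * B j = 1) :
    ((6 : ℂ) • (1 : Matrix (Fin dA × Fin dB) (Fin dA × Fin dB) ℂ)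
        - ((∑ i, A i ⊗ₖ B i) - ∑ i, ∑ j, if i = j then 0 else A i ⊗ₖ B j)
      = (∑ i, (A i ⊗ₖ (1 : Matrix (Fin dB) (Fin dB) ℂ)
            + (1 : Matrix (Fin dA) (Fin dA) ℂ) ⊗ₖ (((1 : ℂ) / 2) • (∑ j, B j) - B i)) ^ 2)
        + ((1 : Matrix (Fin dA) (Fin dA) ℂ) ⊗ₖ (((1 : ℂ) / 2) • (B 0 + B 1 + B 2))) ^ 2)
    ∧ ∀ ρ : Matrix (Fin dA × Fin dB) (Fin dA × Fin dB) ℂ, ρ.PosSemidef → ρ.trace = 1 →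
      ((((∑ i, A i ⊗ₖ B i) - ∑ i, ∑ j, if i = j then 0 else A i ⊗ₖ B j) * ρ).trace).re
        ≤ 6 := by
  have key : ((6 : ℂ) • (1 : Matrix (Fin dA × Fin dB) (Fin dA × Fin dB) ℂ)
        - ((∑ i, A i ⊗ₖ B i) - ∑ i, ∑ j, if i = j then 0 else A i ⊗ₖ B j)
      = (∑ i, (A i ⊗ₖ (1 : Matrix (Fin dB) (Fin dB) ℂ)
            + (1 : Matrix (Fin dA) (Fin dA) ℂ) ⊗ₖ (((1 : ℂ) / 2) • (∑ j, B j) - B i)) ^ 2)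
        + ((1 : Matrix (Fin dA) (Fin dA) ℂ) ⊗ₖ (((1 : ℂ) / 2) • (B 0 + B 1 + B 2))) ^ 2) := by
    simp only [Fin.sum_univ_three, pow_two, Fin.reduceEq, reduceIte, if_true, if_false]
    simp only [smul_sub, smul_add, kron_sub', sub_kron', add_kronecker,
      kronecker_add, smul_kronecker, kronecker_smul]
    simp only [mul_add, add_mul, mul_sub, sub_mul, Matrix.smul_mul, Matrix.mul_smul,
      ← mul_kronecker_mul, hA2, hB2, Matrix.one_mul, Matrix.mul_one, one_kronecker_one,
      smul_smul]
    module
  refine ⟨key, fun ρ hρ htr => ?_⟩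
  -- each square term is Hermitian-squared, hence PSD
  have hermX : ∀ i : Fin 3, (A i ⊗ₖ (1 : Matrix (Fin dB) (Fin dB) ℂ)
      + (1 : Matrix (Fin dA) (Fin dA) ℂ) ⊗ₖ (((1 : ℂ) / 2) • (∑ j, B j) - B i)).IsHermitian := by
    intro i
    unfold Matrix.IsHermitian
    rw [conjTranspose_add, kron_conjTranspose', kron_conjTranspose']
    have h1 : (((1 : ℂ) / 2) • (∑ j, B j) - B i)ᴴ = ((1 : ℂ) / 2) • (∑ j, B j) - B i := by
      rw [conjTranspose_sub, conjTranspose_smul, conjTranspose_sum]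
      simp only [(hB _).eq]
      norm_num
    rw [h1, (hA i).eq]
    simp
  have hermY : ((1 : Matrix (Fin dA) (Fin dA) ℂ) ⊗ₖ
      (((1 : ℂ) / 2) • (B 0 + B 1 + B 2))).IsHermitian := by
    unfold Matrix.IsHermitian
    rw [kron_conjTranspose', conjTranspose_one, conjTranspose_smul, conjTranspose_add,
      conjTranspose_add]
    simp only [(hB _).eq]
    norm_num
  have sqPSD : ∀ {M : Matrix (Fin dA × Fin dB) (Fin dA × Fin dB) ℂ}, M.IsHermitian →
      (M ^ 2).PosSemidef := by
    intro M hM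
    have := Matrix.posSemidef_conjTranspose_mul_self M
    rwa [hM.eq, ← pow_two] at this
  have hSpsd : ((∑ i, (A i ⊗ₖ (1 : Matrix (Fin dB) (Fin dB) ℂ)
            + (1 : Matrix (Fin dA) (Fin dA) ℂ) ⊗ₖ (((1 : ℂ) / 2) • (∑ j, B j) - B i)) ^ 2)
        + ((1 : Matrix (Fin dA) (Fin dA) ℂ) ⊗ₖ (((1 : ℂ) / 2) • (B 0 + B 1 + B 2))) ^ 2).PosSemidef := by
    refine Matrix.PosSemidef.add ?_ (sqPSD hermY)
    rw [Fin.sum_univ_three]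
    exact ((sqPSD (hermX 0)).add (sqPSD (hermX 1))).add (sqPSD (hermX 2))
  rw [← key] at hSpsd
  have h0 := trace_mul_re_nonneg' hSpsd hρ
  rw [Matrix.sub_mul, Matrix.smul_mul, Matrix.one_mul, trace_sub, trace_smul, htr] at h0
  simp only [Complex.sub_re, Complex.real_smul] at h0
  simp only [smul_eq_mul, mul_one] at h0
  have : ((6 : ℂ)).re = 6 := by norm_num
  linarith [h0]
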